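/- If (r_c, θ_c) ∈ ℝ^d × ℝ^d is a stationary point of the cost function f (i.e. all 2d partial derivatives of f vanish at (r_c, θ_c)) with r_c ≠ 0, then f(r_c, θ_c) = 0; since f is nonnegative everywhere, (r_c, θ_c) is a global minimum of f. -/

import Mathlib

open Matrix Complex
open scoped Classical

noncomputable section

/-- Single-qubit Pauli matrices: `0 ↦ I`, `1 ↦ X`, `2 ↦ Y`, `3 ↦ Z`. -/
def pauli1 (a : Fin 4) : Matrix (Fin 2) (Fin 2) ℂ :=
  if a = 0 then 1
  else if a = 1 then !![0, 1; 1, 0]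
  else if a = 2 then !![0, -Complex.I; Complex.I, 0]
  else !![1, 0; 0, -1]

/-- The `n`-qubit Pauli string `σ^{(1)} ⊗ ⋯ ⊗ σ^{(n)}` associated to `s : Fin n → Fin 4`,
realized as a matrix on the `(Fin n → Fin 2)`-indexed space of dimension `2^n`. -/
def pauliOp {n : ℕ} (s : Fin n → Fin 4) :
    Matrix (Fin n → Fin 2) (Fin n → Fin 2) ℂ :=
  Matrix.of fun i j => ∏ k, pauli1 (s k) (i k) (j k)

/-- `G₁`: the off-diagonal Pauli strings (some factor is `X` or `Y`). -/
def G1 (n : ℕ) : Finset (Fin n → Fin 4) :=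
  Finset.univ.filter fun s => ∃ k, s k = 1 ∨ s k = 2

/-- The diagonal Pauli strings (every factor is `I` or `Z`). -/
def DiagStrings (n : ℕ) : Finset (Fin n → Fin 4) :=
  Finset.univ.filter fun s => ∀ k, s k = 0 ∨ s k = 3

variable {n d : ℕ}

/-- `K(r,θ) = Σ_j r_j e^{iθ_j} P_j`. -/
def Kmat (P : Fin d → Fin n → Fin 4) (x : (Fin d → ℝ) × (Fin d → ℝ)) :
    Matrix (Fin n → Fin 2) (Fin n → Fin 2) ℂ :=
  ∑ j, ((x.1 j : ℂ) * Complex.exp (Complex.I * (x.2 j : ℂ))) • pauliOp (P j)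

/-- The cost function `f(r,θ) = Σ_{P ∈ G₁} tr(K(r,θ)† H K(r,θ) P)²` (the traces being real). -/
def costf (H : Matrix (Fin n → Fin 2) (Fin n → Fin 2) ℂ)
    (P : Fin d → Fin n → Fin 4) (x : (Fin d → ℝ) × (Fin d → ℝ)) : ℝ :=
  ∑ Q ∈ G1 n, (((Kmat P x)ᴴ * H * Kmat P x * pauliOp Q).trace.re) ^ 2

/-- `φ_P(r,θ) = 2^{-n} tr(K(r,θ)† K(r,θ) P)` (real). -/
def phi (P : Fin d → Fin n → Fin 4) (Q : Fin n → Fin 4)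
    (x : (Fin d → ℝ) × (Fin d → ℝ)) : ℝ :=
  (1 / 2 ^ n) * ((Kmat P x)ᴴ * Kmat P x * pauliOp Q).trace.re

/-- `G₂`: non-identity Pauli strings `Q` with `P_i P_j ∈ {Q, -Q, iQ, -iQ}` for some `i, j`. -/
def G2 (P : Fin d → Fin n → Fin 4) : Finset (Fin n → Fin 4) :=
  Finset.univ.filter fun Q => Q ≠ (fun _ => 0) ∧ ∃ i j : Fin d, ∃ c : ℂ,
    (c = 1 ∨ c = -1 ∨ c = Complex.I ∨ c = -Complex.I) ∧
    pauliOp (P i) * pauliOp (P j) = c • pauliOp Q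

/-- The total cost function `F = f + Σ_{P ∈ G₂} φ_P²`. -/
def totalF (H : Matrix (Fin n → Fin 2) (Fin n → Fin 2) ℂ)
    (P : Fin d → Fin n → Fin 4) (x : (Fin d → ℝ) × (Fin d → ℝ)) : ℝ :=
  costf H P x + ∑ Q ∈ G2 P, phi P Q x ^ 2

end


@[fun_prop] lemma myOfRealDiff : Differentiable ℝ Complex.ofReal := Complex.ofRealCLM.differentiable
@[fun_prop] lemma myStarDiff : Differentiable ℝ (star : ℂ → ℂ) := Complex.conjCLE.differentiable
@[fun_prop] lemma myReDiff : Differentiable ℝ Complex.re := Complex.reCLM.differentiable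
@[fun_prop] lemma myImDiff : Differentiable ℝ Complex.im := Complex.imCLM.differentiable

lemma costf_diff {n d : ℕ} (H : Matrix (Fin n → Fin 2) (Fin n → Fin 2) ℂ)
    (P : Fin d → Fin n → Fin 4) : Differentiable ℝ (costf H P) := by
  unfold costf Kmat
  simp only [Matrix.trace, Matrix.diag, Matrix.mul_apply, Matrix.conjTranspose_apply,
    Matrix.sum_apply, Matrix.smul_apply, smul_eq_mul]
  set_option maxHeartbeats 1000000 in fun_prop

lemma Kmat_smul {n d : ℕ} (P : Fin d → Fin n → Fin 4) (x : (Fin d → ℝ) × (Fin d → ℝ)) (t : ℝ) :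
    Kmat P (t • x.1, x.2) = (t : ℂ) • Kmat P x := by
  unfold Kmat
  rw [Finset.smul_sum]
  refine Finset.sum_congr rfl fun j _ => ?_
  rw [smul_smul]
  congr 1
  simp only [Pi.smul_apply, smul_eq_mul]
  push_cast
  ring

lemma costf_smul {n d : ℕ} (H : Matrix (Fin n → Fin 2) (Fin n → Fin 2) ℂ)
    (P : Fin d → Fin n → Fin 4) (x : (Fin d → ℝ) × (Fin d → ℝ)) (t : ℝ) :
    costf H P (t • x.1, x.2) = t ^ 4 * costf H P x := by
  unfold costf
  rw [Finset.mul_sum]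
  refine Finset.sum_congr rfl fun Q _ => ?_
  rw [Kmat_smul]
  have : ((t : ℂ) • Kmat P x)ᴴ * H * ((t : ℂ) • Kmat P x) * pauliOp Q
      = (((t : ℝ) ^ 2 : ℝ) : ℂ) • ((Kmat P x)ᴴ * H * Kmat P x * pauliOp Q) := by
    simp only [Matrix.conjTranspose_smul, Matrix.smul_mul, Matrix.mul_smul, smul_smul,
      Complex.star_def, Complex.conj_ofReal]
    push_cast
    ring_nf
  rw [this, Matrix.trace_smul, smul_eq_mul, Complex.re_ofReal_mul]
  ring

/-- any stationary point `(r_c, θ_c)` of the cost function `f` with `r_c ≠ 0`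
satisfies `f(r_c,θ_c) = 0`, and hence is a global minimum of the nonnegative function `f`. -/
theorem statement1 {n d : ℕ} (hn : 1 ≤ n)
    (H : Matrix (Fin n → Fin 2) (Fin n → Fin 2) ℂ) (hH : H.IsHermitian)
    (P : Fin d → Fin n → Fin 4) (hP : Function.Injective P)
    (x : (Fin d → ℝ) × (Fin d → ℝ))
    (hstat : ∀ j : Fin d,
      fderiv ℝ (costf H P) x (Pi.single j 1, 0) = 0 ∧
      fderiv ℝ (costf H P) x (0, Pi.single j 1) = 0)
    (hr : x.1 ≠ 0) :
    costf H P x = 0 ∧ ∀ y : (Fin d → ℝ) × (Fin d → ℝ), costf H P x ≤ costf H P y := by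
  have hnonneg : ∀ y, 0 ≤ costf H P y := fun y =>
    Finset.sum_nonneg fun Q _ => sq_nonneg _
  set c := costf H P x with hc
  have hL : HasDerivAt (fun t : ℝ => ((t • x.1, x.2) : (Fin d → ℝ) × (Fin d → ℝ)))
      ((x.1, 0) : (Fin d → ℝ) × (Fin d → ℝ)) 1 := by
    refine HasDerivAt.prodMk ?_ (hasDerivAt_const _ _)
    simpa using (hasDerivAt_id (1:ℝ)).smul_const x.1
  have hdf : HasFDerivAt (costf H P) (fderiv ℝ (costf H P) x) x :=
    ((costf_diff H P) x).hasFDerivAt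
  have hdf1 : HasFDerivAt (costf H P) (fderiv ℝ (costf H P) x) ((1:ℝ) • x.1, x.2) := by
    simpa using hdf
  have h1 : HasDerivAt (fun t : ℝ => costf H P (t • x.1, x.2))
      (fderiv ℝ (costf H P) x (x.1, 0)) 1 := by
    have := hdf1.comp_hasDerivAt 1 hL; exact this
  have h2 : HasDerivAt (fun t : ℝ => costf H P (t • x.1, x.2)) (4 * c) 1 := by
    have heq : (fun t : ℝ => costf H P (t • x.1, x.2)) = fun t : ℝ => t ^ 4 * c := by
      funext t; exact costf_smul H P x t
    rw [heq]
    simpa using (hasDerivAt_pow 4 (1:ℝ)).mul_const c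
  have hkey : fderiv ℝ (costf H P) x (x.1, 0) = 4 * c := h1.unique h2
  have hzero : fderiv ℝ (costf H P) x (x.1, 0) = 0 := by
    have hsum : ((x.1, 0) : (Fin d → ℝ) × (Fin d → ℝ))
        = ∑ j, x.1 j • (((Pi.single j 1 : Fin d → ℝ), (0 : Fin d → ℝ))) := by
      refine Prod.ext ?_ ?_
      · rw [Prod.fst_sum]
        funext i
        simp [Finset.sum_apply, Pi.single_apply]
      · rw [Prod.snd_sum]
        simp
    rw [hsum, map_sum]
    refine Finset.sum_eq_zero fun j _ => ?_
    rw [_root_.map_smul, (hstat j).1, smul_zero]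
  have hc0 : c = 0 := by
    have := hzero ▸ hkey
    linarith
  exact ⟨hc0, fun y => by rw [hc0]; exact hnonneg y⟩
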